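/- arXiv:2102.00766 — 2 statements merged into one kernel-verified Lean document; each statement's English description precedes it below -/
import Mathlib

section
/- Let R be a ring and M_1, ..., M_n R-modules of finite length such that for all i ≠ j, the modules M_i and M_j have no isomorphic simple composition factor in common. If N is a submodule of M_1 ⊕ ... ⊕ M_n such that every projection N → M_i is surjective, then N = M_1 ⊕ ... ⊕ M_n. -/
/-- `S` is a composition factor of `M`: it is isomorphic to a quotient of a
submodule of `M` (for `S` simple and `M` of finite length this is equivalent to
appearing in a composition series of `M`). -/
def IsCompFactor (A : Type*) [Ring A] (M : Type*) [AddCommGroup M] [Module A M]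
    (S : Type*) [AddCommGroup S] [Module A S] : Prop :=
  ∃ (q : Submodule A M) (p : Submodule A q), Nonempty ((q ⧸ p) ≃ₗ[A] S)

section Helpers

variable {A : Type*} [Ring A]

lemma IsCompFactor.of_equiv {X S : Type*} [AddCommGroup X] [Module A X]
    [AddCommGroup S] [Module A S] (e : X ≃ₗ[A] S) : IsCompFactor A X S := by
  refine ⟨⊤, ⊥, ⟨((Submodule.quotEquivOfEqBot _ rfl).trans (Submodule.topEquiv)).trans e⟩⟩

lemma IsCompFactor.of_injective {X Y S : Type*} [AddCommGroup X] [Module A X]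
    [AddCommGroup Y] [Module A Y] [AddCommGroup S] [Module A S]
    (f : X →ₗ[A] Y) (hf : Function.Injective f) (h : IsCompFactor A X S) :
    IsCompFactor A Y S := by
  obtain ⟨q, p, ⟨e⟩⟩ := h
  have hb : Function.Bijective (f.submoduleMap q) := by
    constructor
    · intro a b hab
      apply Subtype.ext
      apply hf
      exact congrArg Subtype.val hab
    · exact LinearMap.submoduleMap_surjective f q
  let e' : q ≃ₗ[A] Submodule.map f q := LinearEquiv.ofBijective (f.submoduleMap q) hb
  exact ⟨Submodule.map f q, Submodule.map (e' : q →ₗ[A] Submodule.map f q) p,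
    ⟨((Submodule.Quotient.equiv p _ e' rfl).symm.trans e).symm.symm⟩⟩

lemma IsCompFactor.of_surjective {X Y S : Type*} [AddCommGroup X] [Module A X]
    [AddCommGroup Y] [Module A Y] [AddCommGroup S] [Module A S]
    (f : X →ₗ[A] Y) (hf : Function.Surjective f) (h : IsCompFactor A Y S) :
    IsCompFactor A X S := by
  obtain ⟨q', p', ⟨e⟩⟩ := h
  let q : Submodule A X := q'.comap f
  let g : q →ₗ[A] q' := f.restrict (fun x hx => hx)
  have hg : Function.Surjective g := by
    rintro ⟨y, hy⟩
    obtain ⟨x, rfl⟩ := hf y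
    exact ⟨⟨x, hy⟩, rfl⟩
  let φ : q →ₗ[A] q' ⧸ p' := p'.mkQ.comp g
  have hφ : Function.Surjective φ := (Submodule.mkQ_surjective p').comp hg
  exact ⟨q, LinearMap.ker φ, ⟨(LinearMap.quotKerEquivOfSurjective φ hφ).trans e⟩⟩

lemma IsCompFactor.of_quot {X S : Type*} [AddCommGroup X] [Module A X]
    [AddCommGroup S] [Module A S] (P : Submodule A X)
    (h : IsCompFactor A (X ⧸ P) S) : IsCompFactor A X S :=
  h.of_surjective P.mkQ (Submodule.mkQ_surjective P)

lemma IsCompFactor.of_submodule {X S : Type*} [AddCommGroup X] [Module A X]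
    [AddCommGroup S] [Module A S] (P : Submodule A X)
    (h : IsCompFactor A P S) : IsCompFactor A X S :=
  h.of_injective P.subtype (Submodule.injective_subtype P)

/-- A simple composition factor of `M` is a composition factor of a submodule
`P` or of the quotient `M ⧸ P`. -/
lemma IsCompFactor.sub_or_quot {X S : Type*} [AddCommGroup X] [Module A X]
    [AddCommGroup S] [Module A S] (hS : IsSimpleModule A S)
    (P : Submodule A X) (h : IsCompFactor A X S) :
    IsCompFactor A P S ∨ IsCompFactor A (X ⧸ P) S := by
  obtain ⟨q, p, ⟨e⟩⟩ := h
  haveI : IsSimpleModule A (q ⧸ p) := IsSimpleModule.congr e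
  let P' : Submodule A q := P.comap q.subtype
  rcases eq_bot_or_eq_top (P'.map p.mkQ) with hb | ht
  · -- P' ≤ p; so S is a factor of X ⧸ P
    right
    have hP'p : P' ≤ p := by
      intro x hx
      have : p.mkQ x ∈ P'.map p.mkQ := Submodule.mem_map_of_mem hx
      rw [hb, Submodule.mem_bot] at this
      simpa [Submodule.Quotient.mk_eq_zero] using this
    let g : q →ₗ[A] X ⧸ P := P.mkQ.comp q.subtype
    have hker : LinearMap.ker g = P' := by
      ext x
      simp [g, P', Submodule.Quotient.mk_eq_zero]
    have hsurj2 : Function.Surjective (Submodule.mapQ P' p LinearMap.id hP'p) := by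
      intro y
      obtain ⟨x, rfl⟩ := Submodule.mkQ_surjective p y
      exact ⟨Submodule.Quotient.mk x, rfl⟩
    have h1 : IsCompFactor A (q ⧸ P') S :=
      (IsCompFactor.of_equiv e).of_surjective _ hsurj2
    have h2 : IsCompFactor A (LinearMap.range g) S := by
      refine h1.of_injective
        (((Submodule.quotEquivOfEq _ _ hker.symm).trans g.quotKerEquivRange) :
          (q ⧸ P') ≃ₗ[A] LinearMap.range g) (LinearEquiv.injective _)
    exact h2.of_submodule _
  · -- S is a factor of P
    left
    let φ : P' →ₗ[A] q ⧸ p := p.mkQ.comp P'.subtype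
    have hφ : Function.Surjective φ := by
      rw [← LinearMap.range_eq_top]
      rw [LinearMap.range_comp, Submodule.range_subtype]
      exact ht
    have h1 : IsCompFactor A P' S := (IsCompFactor.of_equiv e).of_surjective φ hφ
    have h2 : IsCompFactor A P S := by
      refine h1.of_injective (LinearMap.restrict q.subtype
        (p := P') (q := P) (fun x hx => hx)) ?_
      intro a b hab
      have h1 := congrArg Subtype.val hab
      simp only [LinearMap.restrict_apply, Submodule.coe_subtype] at h1
      exact Subtype.ext (Subtype.ext h1)
    exact h2

lemma exists_simple_compFactor {X : Type} [AddCommGroup X] [Module A X]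
    [IsArtinian A X] (hX : Nontrivial X) :
    ∃ (S : Type) (_ : AddCommGroup S) (_ : Module A S),
      IsSimpleModule A S ∧ IsCompFactor A X S := by
  obtain ⟨W, hW⟩ := (IsAtomic.eq_bot_or_exists_atom_le (⊤ : Submodule A X)).resolve_left
    (by simp)
  refine ⟨W, inferInstance, inferInstance, isSimpleModule_iff_isAtom.2 hW.1, ?_⟩
  exact ⟨W, ⊥, ⟨Submodule.quotEquivOfEqBot _ rfl⟩⟩

lemma compFactor_pi_aux (k : ℕ) : ∀ (ι : Type) [Fintype ι] [DecidableEq ι],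
    Fintype.card ι = k → ∀ (M : ι → Type) [∀ i, AddCommGroup (M i)] [∀ i, Module A (M i)]
    (S : Type) [AddCommGroup S] [Module A S], IsSimpleModule A S →
    IsCompFactor A (∀ i, M i) S → ∃ i, IsCompFactor A (M i) S := by
  induction k with
  | zero =>
    intro ι _ _ hcard M _ _ S _ _ hS h
    haveI : IsEmpty ι := Fintype.card_eq_zero_iff.mp hcard
    haveI : Subsingleton (∀ i, M i) := inferInstance
    obtain ⟨q, p, ⟨e⟩⟩ := h
    haveI : Nontrivial S := IsSimpleModule.nontrivial A S
    haveI : Subsingleton (↥q) := inferInstance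
    haveI : Subsingleton (q ⧸ p) :=
      ⟨fun a b => by
        obtain ⟨x, rfl⟩ := Submodule.mkQ_surjective p a
        obtain ⟨y, rfl⟩ := Submodule.mkQ_surjective p b
        exact congrArg _ (Subsingleton.elim x y)⟩
    haveI : Subsingleton S := e.symm.toEquiv.subsingleton
    exact absurd (false_of_nontrivial_of_subsingleton S) id
  | succ k ih =>
    intro ι _ _ hcard M _ _ S _ _ hS h
    haveI : Nonempty ι := Fintype.card_pos_iff.mp (by omega)
    obtain ⟨j0⟩ := ‹Nonempty ι›
    rcases h.sub_or_quot hS (LinearMap.ker (LinearMap.proj (R := A) (φ := M) j0)) with h1 | h2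
    · -- composition factor of the kernel ≃ product over {j ≠ j0}
      let e : (LinearMap.ker (LinearMap.proj (R := A) (φ := M) j0)) ≃ₗ[A]
          (∀ j : {j : ι // j ≠ j0}, M j.1) :=
        { toFun := fun x j => x.1 j.1
          map_add' := fun x y => rfl
          map_smul' := fun c x => rfl
          invFun := fun f => ⟨fun j => if h : j = j0 then 0 else f ⟨j, h⟩, by
            simp [LinearMap.mem_ker]⟩
          left_inv := by
            rintro ⟨x, hx⟩
            apply Subtype.ext
            funext j
            by_cases hj : j = j0
            · subst hj
              simpa [LinearMap.mem_ker] using hx.symm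
            · simp [hj]
          right_inv := by
            intro f
            funext j
            simp [j.2] }
      have h1' : IsCompFactor A (∀ j : {j : ι // j ≠ j0}, M j.1) S :=
        h1.of_injective e.toLinearMap e.injective
      have hcard' : Fintype.card {j : ι // j ≠ j0} = k := by
        simp [Fintype.card_subtype_compl, hcard]
      obtain ⟨j, hj⟩ := ih {j : ι // j ≠ j0} hcard' (fun j => M j.1) S hS h1'
      exact ⟨j.1, hj⟩
    · -- composition factor of the quotient ≃ M j0
      have hproj : Function.Surjective (LinearMap.proj (R := A) (φ := M) j0) := by
        intro m
        exact ⟨Pi.single j0 m, by simp⟩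
      refine ⟨j0, h2.of_injective
        (LinearMap.quotKerEquivOfSurjective _ hproj).toLinearMap
        (LinearEquiv.injective _)⟩

end Helpers

/-- If `M₁, ..., Mₙ` are finite-length modules with pairwise no common simple
composition factor, and `N ⊆ M₁ ⊕ ... ⊕ Mₙ` surjects onto every factor, then
`N` is the whole direct sum. -/
theorem stmt9 {A : Type} [Ring A] (n : ℕ) (M : Fin n → Type)
    [∀ i, AddCommGroup (M i)] [∀ i, Module A (M i)]
    (hlen : ∀ i, IsFiniteLength A (M i))
    (hdisj : ∀ i j, i ≠ j → ∀ (S : Type) [AddCommGroup S] [Module A S],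
      IsSimpleModule A S → ¬(IsCompFactor A (M i) S ∧ IsCompFactor A (M j) S))
    (N : Submodule A (Π i, M i))
    (hsurj : ∀ (i : Fin n) (m : M i), ∃ x ∈ N, x i = m) :
    N = ⊤ := by
  have key : ∀ i : Fin n, N.comap (LinearMap.single A M i) = ⊤ := by
    intro i
    by_contra hK
    set K : Submodule A (M i) := N.comap (LinearMap.single A M i) with hKdef
    haveI : IsArtinian A (M i) := (isFiniteLength_iff_isNoetherian_isArtinian.mp (hlen i)).2
    have hlt : K < ⊤ := lt_top_iff_ne_top.mpr hK
    haveI : Nontrivial (M i ⧸ K) := Submodule.Quotient.nontrivial_iff.mpr hlt.ne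
    haveI : IsArtinian A (M i ⧸ K) := inferInstance
    obtain ⟨S, _, _, hSsimple, hSfac⟩ := exists_simple_compFactor (A := A) (X := M i ⧸ K)
      inferInstance
    -- S is a composition factor of M i
    have hfac_i : IsCompFactor A (M i) S := hSfac.of_quot K
    -- the projection from N to M i ⧸ K
    let φ : N →ₗ[A] M i ⧸ K := K.mkQ.comp ((LinearMap.proj (R := A) (φ := M) i).comp N.subtype)
    have hφ : Function.Surjective φ := by
      intro y
      obtain ⟨m, rfl⟩ := Submodule.mkQ_surjective K y
      obtain ⟨x, hx, hxi⟩ := hsurj i m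
      exact ⟨⟨x, hx⟩, by simp [φ, hxi]⟩
    -- the map from N to the product over j ≠ i
    let ρ : N →ₗ[A] (∀ j : {j : Fin n // j ≠ i}, M j.1) :=
      { toFun := fun x j => x.1 j.1
        map_add' := fun x y => rfl
        map_smul' := fun c x => rfl }
    -- ker ρ ≤ ker φ
    have hkk : LinearMap.ker ρ ≤ LinearMap.ker φ := by
      rintro ⟨x, hx⟩ hxk
      have hx0 : ∀ j, j ≠ i → x j = 0 := by
        intro j hj
        have := congrFun (show ρ ⟨x, hx⟩ = 0 from hxk) ⟨j, hj⟩
        simpa [ρ] using this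
      have hxs : x = Pi.single i (x i) := by
        funext j
        by_cases hj : j = i
        · subst hj; simp
        · simp [hx0 j hj, Pi.single_eq_of_ne hj]
      have hxK : x i ∈ K := by
        rw [hKdef]
        simpa [LinearMap.single_apply, ← hxs] using hx
      simp only [LinearMap.mem_ker, φ, LinearMap.comp_apply]
      simpa [Submodule.Quotient.mk_eq_zero] using hxK
    -- φ factors through N ⧸ ker ρ
    let φbar : (N ⧸ LinearMap.ker ρ) →ₗ[A] M i ⧸ K :=
      (LinearMap.ker ρ).liftQ φ hkk
    have hφbar : Function.Surjective φbar := by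
      intro y
      obtain ⟨x, rfl⟩ := hφ y
      exact ⟨Submodule.Quotient.mk x, rfl⟩
    have hfacQ : IsCompFactor A (N ⧸ LinearMap.ker ρ) S := hSfac.of_surjective φbar hφbar
    have hfacProd : IsCompFactor A (∀ j : {j : Fin n // j ≠ i}, M j.1) S := by
      have := hfacQ.of_injective ρ.quotKerEquivRange.toLinearMap (LinearEquiv.injective _)
      exact this.of_submodule _
    obtain ⟨j, hj⟩ := compFactor_pi_aux (A := A) (Fintype.card {j : Fin n // j ≠ i})
      {j : Fin n // j ≠ i} rfl (fun j => M j.1) S hSsimple hfacProd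
    exact hdisj i j.1 (Ne.symm j.2) S hSsimple ⟨hfac_i, hj⟩
  -- conclude
  rw [eq_top_iff]
  intro x _
  have : x = ∑ i, Pi.single i (x i) := (Finset.univ_sum_single x).symm
  rw [this]
  apply Submodule.sum_mem
  intro i _
  have hxi : x i ∈ N.comap (LinearMap.single A M i) := by rw [key i]; trivial
  simpa [LinearMap.single_apply] using hxi
end

section
/- Hypergeometric contiguity identity: let a, b, c ∈ ℂ with c not a non-positive integer, and let F = ∑_{m≥0} ((a)_m (b)_m / ((c)_m m!)) z^m ∈ ℂ[[z]] be the formal Gauss hypergeometric series, where (x)_m denotes the rising factorial. For every integer k ≥ 0, define the differential operator Q_k = z(z−1)(d/dz)² + [(a+b−2k−1)z − c + 2k + 2](d/dz) + (k² + (2−a−b)k + (a−1)(b−1)) acting on ℂ[[z]]. Then Q_k(z^{k+1} F) = (k+1)(k+2−c) · z^k F as formal power series. -/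
open PowerSeries

lemma poch_ne_zero (c : ℂ) (hc : ∀ m : ℕ, c ≠ -(m : ℂ)) (m : ℕ) :
    (ascPochhammer ℂ m).eval c ≠ 0 := by
  induction m with
  | zero => simp
  | succ n ih =>
    rw [ascPochhammer_succ_right]
    simp only [Polynomial.eval_mul, Polynomial.eval_add, Polynomial.eval_X,
      Polynomial.eval_natCast]
    refine mul_ne_zero ih fun h => hc n (eq_neg_of_add_eq_zero_left h)

lemma key (a b c : ℂ) (hc : ∀ m : ℕ, c ≠ -(m : ℂ)) (m : ℕ)
    (f : ℕ → ℂ)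
    (hf : ∀ n, f n = (ascPochhammer ℂ n).eval a * (ascPochhammer ℂ n).eval b /
        ((ascPochhammer ℂ n).eval c * (n.factorial : ℂ))) :
    ((m:ℂ)+1) * ((m:ℂ) + c) * f (m+1) = ((m:ℂ)+a) * ((m:ℂ)+b) * f m := by
  rw [hf, hf, ascPochhammer_succ_right, Nat.factorial_succ]
  simp only [Polynomial.eval_mul, Polynomial.eval_add, Polynomial.eval_X,
    Polynomial.eval_natCast, Nat.cast_mul, Nat.cast_add, Nat.cast_one]
  have h1 := poch_ne_zero c hc m
  have h2 : ((m.factorial : ℂ)) ≠ 0 := Nat.cast_ne_zero.mpr m.factorial_ne_zero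
  have h3 : (c + (m:ℂ)) ≠ 0 := fun h => hc m (eq_neg_of_add_eq_zero_left h)
  have h4 : ((m:ℂ)+1) ≠ 0 := Nat.cast_add_one_ne_zero m
  field_simp
  ring

set_option linter.deprecated false in
lemma coeff_derivativeFun_port (f : ℂ⟦X⟧) (n : ℕ) :
    coeff n (derivativeFun f) = coeff (n + 1) f * (n + 1) :=
  coeff_derivative f n


/-- Hypergeometric contiguity identity: with `F = ∑ (a)ₘ(b)ₘ/((c)ₘ m!) zᵐ` the formal
Gauss hypergeometric series and `Qₖ` the displayed second-order operator, one has
`Qₖ(z^{k+1} F) = (k+1)(k+2−c) zᵏ F` for every `k ≥ 0`. -/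
theorem stmt13 (a b c : ℂ) (hc : ∀ m : ℕ, c ≠ -(m : ℂ))
    (F : ℂ⟦X⟧)
    (hF : F = PowerSeries.mk fun m =>
      (ascPochhammer ℂ m).eval a * (ascPochhammer ℂ m).eval b /
        ((ascPochhammer ℂ m).eval c * (m.factorial : ℂ)))
    (k : ℕ) :
    PowerSeries.X * (PowerSeries.X - 1) *
        derivativeFun (derivativeFun (PowerSeries.X ^ (k + 1) * F)) +
      (PowerSeries.C (a + b - 2 * (k : ℂ) - 1) * PowerSeries.X
          - PowerSeries.C c + PowerSeries.C (2 * (k : ℂ) + 2)) *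
        derivativeFun (PowerSeries.X ^ (k + 1) * F) +
      PowerSeries.C ((k : ℂ) ^ 2 + (2 - a - b) * (k : ℂ) + (a - 1) * (b - 1)) *
        (PowerSeries.X ^ (k + 1) * F) =
    PowerSeries.C (((k : ℂ) + 1) * ((k : ℂ) + 2 - c)) * PowerSeries.X ^ k * F := by
  subst hF
  set f : ℕ → ℂ := fun m =>
      (ascPochhammer ℂ m).eval a * (ascPochhammer ℂ m).eval b /
        ((ascPochhammer ℂ m).eval c * (m.factorial : ℂ)) with hfdef
  set q1 := a + b - 2 * (k : ℂ) - 1 with hq1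
  set q0 := 2 * (k : ℂ) + 2 - c with hq0
  set qK := (k : ℂ) ^ 2 + (2 - a - b) * (k : ℂ) + (a - 1) * (b - 1) with hqK
  set qR := ((k : ℂ) + 1) * ((k : ℂ) + 2 - c) with hqR
  set G : ℂ⟦X⟧ := X ^ (k+1) * PowerSeries.mk f with hG
  rw [show (X * (X - 1) * derivativeFun (derivativeFun G) : ℂ⟦X⟧)
      = X ^ 2 * derivativeFun (derivativeFun G) - X ^ 1 * derivativeFun (derivativeFun G) by
        ring]
  rw [show ((C q1 * X - C c + C (2 * (k : ℂ) + 2)) *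
        derivativeFun G : ℂ⟦X⟧)
      = C q1 * (X ^ 1 * derivativeFun G)
        + C q0 * derivativeFun G by
        rw [hq1, hq0]; simp only [map_sub, map_add]; ring]
  rw [mul_assoc (C _)]
  ext n
  simp only [map_add, map_sub, coeff_C_mul, coeff_X_pow_mul', coeff_derivativeFun_port, hG,
    coeff_mk]
  have hf2 : forall nn, f nn = (ascPochhammer ℂ nn).eval a * (ascPochhammer ℂ nn).eval b /
        ((ascPochhammer ℂ nn).eval c * (nn.factorial : ℂ)) := fun nn => congrFun hfdef nn
  rcases lt_or_ge n k with h | h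
  · split_ifs <;> first | (exfalso; omega) | ring
  · obtain ⟨m, rfl⟩ := Nat.exists_eq_add_of_le h
    have hkey := key a b c hc 0 f hf2
    cases m with
    | zero =>
      split_ifs with h1 h2 h3 h4 h5 h6 h7 h8 <;> try (exfalso; omega)
      · -- 2 ≤ k
        rw [show k + 0 - 1 + 1 + 1 - (k + 1) = 0 from by omega,
          show k + 0 + 1 - (k + 1) = 0 from by omega,
          show k + 0 - k = 0 from by omega,
          show k + 0 - 1 + 1 = k from by omega,
          show ((k + 0 - 1 : ℕ) : ℂ) = (k : ℂ) - 1 from by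
            rw [Nat.cast_sub (by omega)]; push_cast; ring,
          hq1, hq0, hqK, hqR]
        push_cast
        ring
      · -- k = 1
        have hk : k = 1 := by omega
        subst hk
        norm_num [hq1, hq0, hqK, hqR]
        ring
      · -- k = 0
        have hk : k = 0 := by omega
        subst hk
        norm_num [hq1, hq0, hqK, hqR]
    | succ m =>
      have hkeym := key a b c hc m f hf2
      split_ifs with h1 h2 h3 h4 h5 h6 h7 h8 <;> try (exfalso; omega)
      · -- generic: 2 ≤ k + m + 1
        rw [show k + (m+1) - 2 + 1 + 1 - (k + 1) = m from by omega,
          show k + (m+1) - 1 + 1 + 1 - (k + 1) = m + 1 from by omega,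
          show k + (m+1) - 1 + 1 - (k + 1) = m from by omega,
          show k + (m+1) + 1 - (k + 1) = m + 1 from by omega,
          show k + (m+1) - (k + 1) = m from by omega,
          show k + (m+1) - k = m + 1 from by omega,
          show k + (m+1) - 2 + 1 = k + m from by omega,
          show k + (m+1) - 1 + 1 = k + m + 1 from by omega,
          show k + (m+1) - 1 = k + m from by omega,
          show ((k + (m+1) - 2 : ℕ) : ℂ) = (k : ℂ) + (m : ℂ) - 1 from by
            rw [Nat.cast_sub (by omega)]; push_cast; ring,
          hq1, hq0, hqK, hqR]
        push_cast
        linear_combination -hkeym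
      · -- k = 0, m = 0
        have hk : k = 0 := by omega
        have hm : m = 0 := by omega
        subst hk; subst hm
        norm_num [hq1, hq0, hqK, hqR]
        linear_combination -hkey
end
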